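/- If u : ℝ^d → ℝ is nonnegative, integrable, radially symmetric and radially nonincreasing, and v : ℝ^d → ℝ is nonnegative, bounded, radially symmetric and radially nonincreasing, then the convolution u ⋆ v is nonnegative, radially symmetric and radially nonincreasing. -/

import Mathlib

open MeasureTheory Real Set

/-- A function on `ℝ^d` is radially symmetric and radially nonincreasing if it is of the form
`x ↦ W ‖x‖` for some `W` nonincreasing on `[0, ∞)`. -/
def RadialNonincreasing {d : ℕ} (w : EuclideanSpace ℝ (Fin d) → ℝ) : Prop :=
  ∃ W : ℝ → ℝ, AntitoneOn W (Set.Ici 0) ∧ ∀ x, w x = W ‖x‖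

open scoped RealInnerProductSpace

section Aux

variable {d : ℕ}

local notation "E" => EuclideanSpace ℝ (Fin d)

set_option maxHeartbeats 1000000 in
/-- Key monotonicity lemma. -/
lemma conv_mono (u v : E → ℝ)
    (hu0 : ∀ x, 0 ≤ u x) (huI : Integrable u)
    (U V : ℝ → ℝ) (hU : Antitone U) (hu : ∀ x, u x = U ‖x‖)
    (hV : Antitone V) (hv : ∀ x, v x = V ‖x‖)
    (hv0 : ∀ x, 0 ≤ v x) (M : ℝ) (hM : ∀ x, v x ≤ M)
    (x x' : E) (hxx : ‖x'‖ ≤ ‖x‖) :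
    (∫ y, u y * v (x - y)) ≤ ∫ y, u y * v (x' - y) := by
  -- measurability of u and v
  have hum : Measurable u := by
    have : u = U ∘ (fun y : E => ‖y‖) := funext fun y => hu y
    rw [this]; exact hU.measurable.comp measurable_norm
  have hvm : Measurable v := by
    have : v = V ∘ (fun y : E => ‖y‖) := funext fun y => hv y
    rw [this]; exact hV.measurable.comp measurable_norm
  have hM0 : 0 ≤ M := le_trans (hv0 0) (hM 0)
  -- integrability of the integrands
  have hint : ∀ z : E, Integrable (fun y => u y * v (z - y)) := by
    intro z
    refine Integrable.mono' (huI.const_mul M) ?_ (Filter.Eventually.of_forall fun y => ?_)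
    · exact (hum.mul (hvm.comp (measurable_const.sub measurable_id))).aestronglyMeasurable
    · have h1 : 0 ≤ u y * v (z - y) := mul_nonneg (hu0 y) (hv0 _)
      rw [Real.norm_eq_abs, abs_of_nonneg h1, mul_comm M (u y)]
      exact mul_le_mul_of_nonneg_left (hM _) (hu0 y)
  by_cases hxe : x = x'
  · rw [hxe]
  -- the reflection
  have hwne : x - x' ≠ 0 := sub_ne_zero.mpr hxe
  have hnw : (0:ℝ) < ‖x - x'‖ := norm_pos_iff.mpr hwne
  set e : E := ‖x - x'‖⁻¹ • (x - x') with he_def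
  have hee : ⟪e, e⟫ = 1 := by
    rw [he_def, real_inner_smul_left, real_inner_smul_right, real_inner_self_eq_norm_sq]
    field_simp
  have hwe : ⟪x - x', e⟫ = ‖x - x'‖ := by
    rw [he_def, real_inner_smul_right, real_inner_self_eq_norm_sq]
    field_simp
  set c : ℝ := (2:ℝ)⁻¹ * ⟪x + x', e⟫ with hc_def
  have hc0 : 0 ≤ c := by
    have : ⟪x + x', e⟫ = ‖x - x'‖⁻¹ * (‖x‖ ^ 2 - ‖x'‖ ^ 2) := by
      rw [he_def, real_inner_smul_right]
      congr 1
      rw [inner_sub_right, inner_add_left, inner_add_left,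
        real_inner_self_eq_norm_sq, real_inner_self_eq_norm_sq, real_inner_comm x' x]
      ring
    rw [hc_def, this]
    have h2 : (0:ℝ) ≤ ‖x‖ ^ 2 - ‖x'‖ ^ 2 := by nlinarith [norm_nonneg x', norm_nonneg x]
    positivity
  -- the linear reflection
  set Lf : E → E := fun y => y - (2 * ⟪y, e⟫) • e with hLf_def
  have hLinner : ∀ y, ⟪Lf y, e⟫ = -⟪y, e⟫ := by
    intro y
    simp only [hLf_def, inner_sub_left, real_inner_smul_left, hee]
    ring
  have hLinv : ∀ y, Lf (Lf y) = y := by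
    intro y
    simp only [hLf_def]
    rw [show ⟪y - (2 * ⟪y, e⟫) • e, e⟫ = -⟪y, e⟫ from hLinner y]
    module
  have hLnorm2 : ∀ y, ⟪Lf y, Lf y⟫ = ⟪y, y⟫ := by
    intro y
    simp only [hLf_def, inner_sub_left, inner_sub_right, real_inner_smul_left,
      real_inner_smul_right, hee, real_inner_comm e y]
    ring
  have hLnorm : ∀ y, ‖Lf y‖ = ‖y‖ := by
    intro y
    have h1 := hLnorm2 y
    rw [real_inner_self_eq_norm_sq, real_inner_self_eq_norm_sq] at h1
    nlinarith [norm_nonneg (Lf y), norm_nonneg y]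
  have hLadd : ∀ a b : E, Lf (a + b) = Lf a + Lf b := by
    intro a b
    simp only [hLf_def, inner_add_left]
    module
  have hLsmul : ∀ (r : ℝ) (a : E), Lf (r • a) = r • Lf a := by
    intro r a
    simp only [hLf_def, real_inner_smul_left]
    module
  set Lmap : E ≃ₗ[ℝ] E := LinearEquiv.ofInvolutive
    { toFun := Lf, map_add' := hLadd, map_smul' := hLsmul } hLinv with hLmap_def
  set L : E ≃ₗᵢ[ℝ] E := ⟨Lmap, fun y => hLnorm y⟩ with hL_def
  have hLapp : ∀ y, L y = Lf y := fun y => rfl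
  -- the affine reflection σ
  set σ : E → E := fun y => L y + (2 * c) • e with hσ_def
  have hσmp : MeasurePreserving σ (volume : Measure E) volume :=
    (measurePreserving_add_right volume ((2 * c) • e)).comp L.measurePreserving
  have hσemb : MeasurableEmbedding σ :=
    (L.toHomeomorph.trans (Homeomorph.addRight ((2 * c) • e))).measurableEmbedding
  -- σ swaps x and x'
  have hxinner : ⟪x, e⟫ = c + 2⁻¹ * ‖x - x'‖ := by
    have h1 : ⟪x, e⟫ - c = 2⁻¹ * ⟪x - x', e⟫ := by
      rw [hc_def, inner_sub_left, inner_add_left]; ring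
    rw [hwe] at h1; linarith
  have hx'inner : ⟪x', e⟫ = c - 2⁻¹ * ‖x - x'‖ := by
    have h1 : ⟪x', e⟫ - c = -(2⁻¹ * ⟪x - x', e⟫) := by
      rw [hc_def, inner_sub_left, inner_add_left]; ring
    rw [hwe] at h1; linarith
  have hnwe : ‖x - x'‖ • e = x - x' := by
    rw [he_def, smul_smul]
    rw [mul_inv_cancel₀ (ne_of_gt hnw), one_smul]
  have hσx : σ x = x' := by
    simp only [hσ_def, hLapp, hLf_def, hxinner]
    rw [show (2 * (c + 2⁻¹ * ‖x - x'‖)) • e = (2*c) • e + ‖x - x'‖ • e by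
      rw [← add_smul]; ring_nf, hnwe]
    abel
  have hσx' : σ x' = x := by
    simp only [hσ_def, hLapp, hLf_def, hx'inner]
    rw [show (2 * (c - 2⁻¹ * ‖x - x'‖)) • e = (2*c) • e - ‖x - x'‖ • e by
      rw [← sub_smul]; ring_nf, hnwe]
    abel
  -- σ is an isometry
  have hσdist : ∀ a b : E, ‖σ a - σ b‖ = ‖a - b‖ := by
    intro a b
    have : σ a - σ b = L (a - b) := by
      simp only [hσ_def]
      rw [L.map_sub]; abel
    rw [this, L.norm_map]
  have hd1 : ∀ y, ‖x - σ y‖ = ‖x' - y‖ := by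
    intro y
    rw [← hσx', ← hσdist x' y]
  have hd2 : ∀ y, ‖x' - σ y‖ = ‖x - y‖ := by
    intro y
    rw [← hσx, ← hσdist x y]
  -- expression for σ y
  have hσy : ∀ y, σ y = y + (2 * (c - ⟪y, e⟫)) • e := by
    intro y
    simp only [hσ_def, hLapp, hLf_def]
    rw [show (2 * (c - ⟪y, e⟫)) • e = (2*c) • e - (2 * ⟪y, e⟫) • e by
      rw [← sub_smul]; ring_nf]
    abel
  -- norm comparisons
  have hσnormsq : ∀ y, ‖σ y‖ ^ 2 = ‖y‖ ^ 2 + 4 * (c - ⟪y, e⟫) * c := by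
    intro y
    rw [← real_inner_self_eq_norm_sq, ← real_inner_self_eq_norm_sq, hσy y]
    simp only [inner_add_left, inner_add_right, real_inner_smul_left, real_inner_smul_right,
      hee, real_inner_comm e y]
    ring
  have h2c : ⟪x + x', e⟫ = 2 * c := by rw [hc_def]; ring
  have hxx' : ⟪x, x⟫ - ⟪x', x'⟫ = 2 * ‖x - x'‖ * c := by
    have h3 : ⟪x + x', x - x'⟫ = ‖x - x'‖ * ⟪x + x', e⟫ := by
      conv_lhs => rw [← hnwe]
      rw [real_inner_smul_right]
    rw [inner_add_left, inner_sub_right, inner_sub_right, h2c, real_inner_comm x' x] at h3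
    linarith
  have hdistsq : ∀ y, ‖x' - y‖ ^ 2 = ‖x - y‖ ^ 2 - 2 * ‖x - x'‖ * (c - ⟪y, e⟫) := by
    intro y
    have h4 : ⟪x, y⟫ - ⟪x', y⟫ = ‖x - x'‖ * ⟪y, e⟫ := by
      have h5 : ⟪y, x - x'⟫ = ‖x - x'‖ * ⟪y, e⟫ := by
        conv_lhs => rw [← hnwe]
        rw [real_inner_smul_right]
      rw [inner_sub_right] at h5
      linarith [h5, real_inner_comm x y, real_inner_comm x' y]
    rw [← real_inner_self_eq_norm_sq, ← real_inner_self_eq_norm_sq]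
    simp only [inner_sub_left, inner_sub_right]
    linarith [hxx', h4, real_inner_comm x y, real_inner_comm x' y]
  -- pointwise inequality
  have hpt : ∀ y, 0 ≤ (u y - u (σ y)) * (v (x' - y) - v (x - y)) := by
    intro y
    rcases le_total (⟪y, e⟫) c with hyc | hyc
    · have hδ : 0 ≤ c - ⟪y, e⟫ := by linarith
      have h1 : ‖y‖ ≤ ‖σ y‖ := by
        have := hσnormsq y
        nlinarith [norm_nonneg y, norm_nonneg (σ y), mul_nonneg hδ hc0]
      have h2 : ‖x' - y‖ ≤ ‖x - y‖ := by
        have := hdistsq y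
        nlinarith [norm_nonneg (x' - y), norm_nonneg (x - y),
          mul_nonneg (mul_nonneg (by norm_num : (0:ℝ) ≤ 2) hnw.le) hδ]
      have hu1 : u (σ y) ≤ u y := by rw [hu, hu]; exact hU h1
      have hv1 : v (x - y) ≤ v (x' - y) := by rw [hv, hv]; exact hV h2
      exact mul_nonneg (by linarith) (by linarith)
    · have hδ : c - ⟪y, e⟫ ≤ 0 := by linarith
      have h1 : ‖σ y‖ ≤ ‖y‖ := by
        have := hσnormsq y
        nlinarith [norm_nonneg y, norm_nonneg (σ y), mul_nonneg (neg_nonneg.mpr hδ) hc0]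
      have h2 : ‖x - y‖ ≤ ‖x' - y‖ := by
        have := hdistsq y
        nlinarith [norm_nonneg (x' - y), norm_nonneg (x - y),
          mul_nonneg (mul_nonneg (by norm_num : (0:ℝ) ≤ 2) hnw.le) (neg_nonneg.mpr hδ)]
      have hu1 : u y ≤ u (σ y) := by rw [hu, hu]; exact hU h1
      have hv1 : v (x' - y) ≤ v (x - y) := by rw [hv, hv]; exact hV h2
      nlinarith [mul_nonneg (sub_nonneg.mpr hu1) (sub_nonneg.mpr hv1)]
  -- the difference function
  set D : E → ℝ := fun y => u y * v (x' - y) - u y * v (x - y) with hD_def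
  have hDI : Integrable D := (hint x').sub (hint x)
  have hDσI : Integrable (D ∘ σ) := (hσmp.integrable_comp_emb hσemb).mpr hDI
  have hcompeq : ∀ y, D y + D (σ y) = (u y - u (σ y)) * (v (x' - y) - v (x - y)) := by
    intro y
    have e1 : v (x' - σ y) = v (x - y) := by rw [hv, hv, hd2]
    have e2 : v (x - σ y) = v (x' - y) := by rw [hv, hv, hd1]
    simp only [hD_def, e1, e2]
    ring
  have hIcomp : ∫ y, D (σ y) = ∫ y, D y := hσmp.integral_comp hσemb D
  have hsum : 0 ≤ ∫ y, (D y + (D ∘ σ) y) :=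
    integral_nonneg fun y => by
      simp only [Function.comp_apply]; rw [hcompeq y]; exact hpt y
  rw [integral_add hDI hDσI] at hsum
  have hDnonneg : 0 ≤ ∫ y, D y := by
    have : ∫ y, (D ∘ σ) y = ∫ y, D y := hIcomp
    linarith
  have := integral_sub (hint x') (hint x)
  simp only [hD_def] at hDnonneg
  rw [this] at hDnonneg
  linarith

end Aux

theorem stmt_10 {d : ℕ} (u v : EuclideanSpace ℝ (Fin d) → ℝ)
    (hu0 : ∀ x, 0 ≤ u x) (huI : Integrable u) (hur : RadialNonincreasing u)
    (hv0 : ∀ x, 0 ≤ v x) (hvb : ∃ M, ∀ x, v x ≤ M) (hvr : RadialNonincreasing v) :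
    (∀ x, 0 ≤ ∫ y, u y * v (x - y)) ∧
      RadialNonincreasing (fun x => ∫ y, u y * v (x - y)) := by
  obtain ⟨W, hW, hw⟩ := hur
  obtain ⟨Wv, hWv, hwv⟩ := hvr
  obtain ⟨M, hM⟩ := hvb
  -- extend W, Wv to antitone functions on all of ℝ
  set U : ℝ → ℝ := fun r => W (max r 0) with hU_def
  have hUanti : Antitone U := fun a b hab =>
    hW (mem_Ici.mpr (le_max_right a 0)) (mem_Ici.mpr (le_max_right b 0))
      (max_le_max hab le_rfl)
  have hUu : ∀ x, u x = U ‖x‖ := by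
    intro x
    rw [hw x, hU_def]
    simp [max_eq_left (norm_nonneg x)]
  set V : ℝ → ℝ := fun r => Wv (max r 0) with hV_def
  have hVanti : Antitone V := fun a b hab =>
    hWv (mem_Ici.mpr (le_max_right a 0)) (mem_Ici.mpr (le_max_right b 0))
      (max_le_max hab le_rfl)
  have hVv : ∀ x, v x = V ‖x‖ := by
    intro x
    rw [hwv x, hV_def]
    simp [max_eq_left (norm_nonneg x)]
  have key : ∀ x x' : EuclideanSpace ℝ (Fin d), ‖x'‖ ≤ ‖x‖ →
      (∫ y, u y * v (x - y)) ≤ ∫ y, u y * v (x' - y) := fun x x' h =>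
    conv_mono u v hu0 huI U V hUanti hUu hVanti hVv hv0 M hM x x' h
  constructor
  · intro x
    exact integral_nonneg fun y => mul_nonneg (hu0 y) (hv0 _)
  · rcases Nat.eq_zero_or_pos d with hd | hd
    · -- d = 0 : the space is a subsingleton
      subst hd
      refine ⟨fun _ => ∫ y, u y * v (0 - y), fun a _ b _ _ => le_rfl, fun x => ?_⟩
      have : x = 0 := Subsingleton.elim x 0
      rw [this]
    · -- d ≥ 1
      set e₁ : EuclideanSpace ℝ (Fin d) := EuclideanSpace.single ⟨0, hd⟩ (1:ℝ) with he₁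
      have hne₁ : ‖e₁‖ = 1 := by
        rw [he₁, EuclideanSpace.norm_single, norm_one]
      have hnorm : ∀ r : ℝ, 0 ≤ r → ‖r • e₁‖ = r := by
        intro r hr
        rw [norm_smul, hne₁, mul_one, Real.norm_eq_abs, abs_of_nonneg hr]
      refine ⟨fun r => ∫ y, u y * v (r • e₁ - y), ?_, ?_⟩
      · intro a ha b hb hab
        exact key (b • e₁) (a • e₁) (by rw [hnorm a ha, hnorm b hb]; exact hab)
      · intro x
        have h1 : ‖(‖x‖ • e₁)‖ = ‖x‖ := hnorm _ (norm_nonneg x)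
        exact le_antisymm (key x (‖x‖ • e₁) h1.le) (key (‖x‖ • e₁) x h1.ge)
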